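/- Let ε, α, A, ω ∈ ℝ and let x, y, pₓ, p_y : ℝ → ℝ be differentiable functions satisfying Hamilton's equations of H_{2v}: ẋ = p_y + (ε/2)x, ẏ = pₓ − (ε/2)(1 − αA²/2)y, ṗₓ = −(ε/2)pₓ − (ω² − ε²/4)y, ṗ_y = (ε/2)(1 − αA²/2)p_y − (ω² − ε²/4)x, for all t ∈ ℝ. Then x and y are twice differentiable and satisfy exactly the linear equations ẍ + ε(αA²/4 − 1)ẋ + (ω² − ε²αA²/8)x = 0 and ÿ − ε(αA²/4 − 1)ẏ + (ω² − ε²αA²/8)y = 0 for all t ∈ ℝ. -/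

import Mathlib

theorem equivalent_linearization_hamilton_equations
    (ε α A ω : ℝ) (x y px py : ℝ → ℝ)
    (hx : Differentiable ℝ x) (hy : Differentiable ℝ y)
    (hpx : Differentiable ℝ px) (hpy : Differentiable ℝ py)
    (h1 : ∀ t : ℝ, deriv x t = py t + ε / 2 * x t)
    (h2 : ∀ t : ℝ, deriv y t = px t - ε / 2 * (1 - α * A ^ 2 / 2) * y t)
    (h3 : ∀ t : ℝ, deriv px t = -(ε / 2) * px t - (ω ^ 2 - ε ^ 2 / 4) * y t)
    (h4 : ∀ t : ℝ, deriv py t = ε / 2 * (1 - α * A ^ 2 / 2) * py t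
      - (ω ^ 2 - ε ^ 2 / 4) * x t) :
    (Differentiable ℝ (deriv x) ∧ Differentiable ℝ (deriv y)) ∧
    (∀ t : ℝ, deriv (deriv x) t + ε * (α * A ^ 2 / 4 - 1) * deriv x t
      + (ω ^ 2 - ε ^ 2 * α * A ^ 2 / 8) * x t = 0) ∧
    (∀ t : ℝ, deriv (deriv y) t - ε * (α * A ^ 2 / 4 - 1) * deriv y t
      + (ω ^ 2 - ε ^ 2 * α * A ^ 2 / 8) * y t = 0) := by
  have hdx : deriv x = fun t => py t + ε / 2 * x t := funext h1
  have hdy : deriv y = fun t => px t - ε / 2 * (1 - α * A ^ 2 / 2) * y t := funext h2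
  have hdxd : Differentiable ℝ (deriv x) := by
    rw [hdx]; exact hpy.add ((differentiable_const _).mul hx)
  have hdyd : Differentiable ℝ (deriv y) := by
    rw [hdy]; exact hpx.sub ((differentiable_const _).mul hy)
  refine ⟨⟨hdxd, hdyd⟩, ?_, ?_⟩
  · intro t
    have hxx : deriv (deriv x) t = deriv py t + ε / 2 * deriv x t := by
      rw [hdx]
      rw [deriv_fun_add (hpy t) ((hx t).const_mul (ε/2)),
        deriv_const_mul _ (hx t)]
      simp only []
      rw [← h1 t]
    rw [hxx, h4 t, h1 t]; ring
  · intro t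
    have hyy : deriv (deriv y) t = deriv px t - ε / 2 * (1 - α * A ^ 2 / 2) * deriv y t := by
      rw [hdy]
      rw [deriv_fun_sub (hpx t) ((hy t).const_mul (ε / 2 * (1 - α * A ^ 2 / 2))),
        deriv_const_mul _ (hy t)]
      simp only []
      rw [← h2 t]
    rw [hyy, h3 t, h2 t]; ring
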